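/- The ideal ED_fin contains no cotowers: for every regular uncountable cardinal κ and every ⊆*-increasing sequence (A_α)_{α<κ} in ED_fin there is a set B ⊆ Δ with Δ∖B infinite such that A_α ⊆* B for every α < κ. -/

import Mathlib

open Set Cardinal

/-- The triangle Δ = {(n,m) : m ≤ n}. -/
def Delta : Set (ℕ × ℕ) := {p | p.2 ≤ p.1}

/-- The ideal ED_fin on Δ: sets with uniformly bounded vertical sections eventually. -/
def EDfin : Set (Set (ℕ × ℕ)) :=
  {A | A ⊆ Delta ∧ ∃ N m : ℕ, ∀ n ≥ m, Set.ncard {k | (n, k) ∈ A} ≤ N}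

set_option linter.deprecated false in
/-- If a countably-indexed classification is put on an unbounded (in `κ.ord`) set of ordinals,
with `κ` regular uncountable, then some class is unbounded. -/
private lemma unbounded_fiber {κ : Cardinal} (hreg : κ.IsRegular)
    (hunc : Cardinal.aleph0 < κ) {ι : Type} [Countable ι]
    (S : Set Ordinal) (f : Ordinal → ι)
    (hS : ∀ γ < κ.ord, ∃ β, β ∈ S ∧ γ ≤ β ∧ β < κ.ord) :
    ∃ i, ∀ γ < κ.ord, ∃ β, β ∈ S ∧ f β = i ∧ γ ≤ β ∧ β < κ.ord := by
  by_contra h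
  push_neg at h
  choose g hg1 hg2 using h
  have hσ : iSup g < κ.ord := by
    refine Ordinal.iSup_lt_ord_lift ?_ hg1
    have h1 : Cardinal.lift (Cardinal.mk ι) ≤ Cardinal.lift ℵ₀ :=
      Cardinal.lift_le.mpr Cardinal.mk_le_aleph0
    rw [Cardinal.lift_aleph0] at h1
    exact h1.trans_lt (hunc.trans_eq hreg.cof_eq.symm)
  obtain ⟨β, hβS, hβge, hβlt⟩ := hS _ hσ
  exact absurd hβlt (not_lt.mpr (hg2 (f β) β hβS rfl ((Ordinal.le_iSup g (f β)).trans hβge)))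

theorem stmt5 (κ : Cardinal) (hreg : κ.IsRegular) (hunc : Cardinal.aleph0 < κ)
    (A : Ordinal → Set (ℕ × ℕ))
    (hmem : ∀ α < κ.ord, A α ∈ EDfin)
    (hmono : ∀ β α, β ≤ α → α < κ.ord → (A β \ A α).Finite) :
    ∃ B : Set (ℕ × ℕ), B ⊆ Delta ∧ (Delta \ B).Infinite ∧
      ∀ α < κ.ord, (A α \ B).Finite := by
  classical
  -- sections are finite subsets of `Iic n`
  have hsecsub : ∀ α, α < κ.ord → ∀ n : ℕ, {k | (n, k) ∈ A α} ⊆ Set.Iic n := by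
    intro α hα n k hk
    exact (hmem α hα).1 hk
  have hsecfin : ∀ α, α < κ.ord → ∀ n : ℕ, ({k | (n, k) ∈ A α}).Finite :=
    fun α hα n => (Set.finite_Iic n).subset (hsecsub α hα n)
  -- Step 1: some class `(N, m)` is unbounded in `κ.ord`
  have hP : ∃ N : ℕ, ∃ m : ℕ, ∀ γ < κ.ord, ∃ β,
      (β < κ.ord ∧ ∀ n, m ≤ n → ({k | (n, k) ∈ A β}).ncard ≤ N) ∧ γ ≤ β := by
    have hcl : ∀ α, α < κ.ord →
        ∃ Nm : ℕ × ℕ, ∀ n, Nm.2 ≤ n → ({k | (n, k) ∈ A α}).ncard ≤ Nm.1 := by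
      intro α hα
      obtain ⟨-, N, m, h⟩ := hmem α hα
      exact ⟨(N, m), fun n hn => h n hn⟩
    set f : Ordinal → ℕ × ℕ := fun α =>
      if h : ∃ Nm : ℕ × ℕ, ∀ n, Nm.2 ≤ n → ({k | (n, k) ∈ A α}).ncard ≤ Nm.1
      then h.choose else (0, 0) with hfdef
    have hf : ∀ α, α < κ.ord → ∀ n, (f α).2 ≤ n → ({k | (n, k) ∈ A α}).ncard ≤ (f α).1 := by
      intro α hα
      have h := hcl α hα
      simp only [hfdef, dif_pos h]
      exact h.choose_spec
    obtain ⟨⟨N, m⟩, hfib⟩ := unbounded_fiber hreg hunc {α | α < κ.ord} f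
      (fun γ hγ => ⟨γ, hγ, le_refl _, hγ⟩)
    refine ⟨N, m, fun γ hγ => ?_⟩
    obtain ⟨β, hβmem, hβf, hβge, hβlt⟩ := hfib γ hγ
    refine ⟨β, ⟨hβlt, fun n hn => ?_⟩, hβge⟩
    have h2 := hf β hβlt n (by rw [hβf]; exact hn)
    rwa [hβf] at h2
  -- minimal such N
  set N₀ := Nat.find hP with hN₀def
  obtain ⟨m₀, hU₀⟩ := Nat.find_spec hP
  -- Step 2: find a `β₀` in the `(N₀, m₀)` class whose sections have size exactly `N₀`
  -- cofinally often (in the columns)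
  obtain ⟨β₀, hβ₀lt, hβ₀cl, hFAT⟩ :
      ∃ β₀, β₀ < κ.ord ∧ (∀ n, m₀ ≤ n → ({k | (n, k) ∈ A β₀}).ncard ≤ N₀) ∧
        ∀ m' : ℕ, ∃ n, m' ≤ n ∧ ({k | (n, k) ∈ A β₀}).ncard = N₀ := by
    have hord0 : (0 : Ordinal) < κ.ord := by
      rw [pos_iff_ne_zero]
      intro h
      rw [Cardinal.ord_eq_zero] at h
      exact absurd (h ▸ hreg.pos) (lt_irrefl 0)
    rcases Nat.eq_zero_or_pos N₀ with h0 | hpos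
    · obtain ⟨β₀, ⟨hβlt, hβcl⟩, -⟩ := hU₀ 0 hord0
      refine ⟨β₀, hβlt, hβcl, fun m' => ⟨max m' m₀, le_max_left _ _, ?_⟩⟩
      have h1 := hβcl (max m' m₀) (le_max_right _ _)
      omega
    · obtain ⟨k, hk⟩ : ∃ k, N₀ = k + 1 := ⟨N₀ - 1, by omega⟩
      -- all classes with bound `k` are bounded
      have hbd : ∀ m' : ℕ, ∃ γ, γ < κ.ord ∧ ∀ β, β < κ.ord →
          (∀ n, m' ≤ n → ({k' | (n, k') ∈ A β}).ncard ≤ k) → β < γ := by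
        intro m'
        have h := Nat.find_min hP (m := k) (by omega)
        push_neg at h
        obtain ⟨γ, hγ1, hγ2⟩ := h m'
        exact ⟨γ, hγ1, fun β hβ hcl => hγ2 β ⟨hβ, hcl⟩⟩
      choose g hg1 hg2 using hbd
      have hσ : iSup g < κ.ord := by
        refine Ordinal.iSup_lt_ord_lift ?_ hg1
        have h1 : Cardinal.lift (Cardinal.mk ℕ) ≤ Cardinal.lift ℵ₀ :=
          Cardinal.lift_le.mpr Cardinal.mk_le_aleph0
        rw [Cardinal.lift_aleph0] at h1
        exact h1.trans_lt (hunc.trans_eq hreg.cof_eq.symm)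
      obtain ⟨β₀, ⟨hβlt, hβcl⟩, hβge⟩ := hU₀ (iSup g) hσ
      refine ⟨β₀, hβlt, hβcl, ?_⟩
      intro m'
      by_contra hcon
      push_neg at hcon
      have hsmall : ∀ n, max m' m₀ ≤ n → ({k' | (n, k') ∈ A β₀}).ncard ≤ k := by
        intro n hn
        have h1 := hβcl n ((le_max_right _ _).trans hn)
        have h2 := hcon n ((le_max_left _ _).trans hn)
        omega
      have h3 := hg2 (max m' m₀) β₀ hβlt hsmall
      have h4 := (Ordinal.le_iSup g (max m' m₀)).trans hβge
      exact absurd (h3.trans_le h4) (lt_irrefl β₀)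
  -- Step 3: classify `β` above `β₀` in the class by the finite set `A β₀ \ A β`
  set gF : Ordinal → Finset (ℕ × ℕ) := fun β =>
    if h : (A β₀ \ A β).Finite then h.toFinset else ∅ with hgFdef
  have hS' : ∀ γ < κ.ord, ∃ β, β ∈ {β | β₀ ≤ β ∧ β < κ.ord ∧
      ∀ n, m₀ ≤ n → ({k | (n, k) ∈ A β}).ncard ≤ N₀} ∧ γ ≤ β ∧ β < κ.ord := by
    intro γ hγ
    obtain ⟨β, ⟨hβlt, hβcl⟩, hβge⟩ := hU₀ (max γ β₀) (max_lt hγ hβ₀lt)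
    exact ⟨β, ⟨(le_max_right _ _).trans hβge, hβlt, hβcl⟩,
      (le_max_left _ _).trans hβge, hβlt⟩
  obtain ⟨s₀, hT⟩ := unbounded_fiber hreg hunc _ gF hS'
  have hdiff : ∀ β, β₀ ≤ β → β < κ.ord → gF β = s₀ → A β₀ \ A β = ↑s₀ := by
    intro β h1 h2 h3
    have hfin := hmono β₀ β h1 h2
    have h4 : gF β = hfin.toFinset := dif_pos hfin
    have h5 : hfin.toFinset = s₀ := h4.symm.trans h3
    rw [← h5, Set.Finite.coe_toFinset]
  -- Step 4: the selector avoiding `A β₀` on full columns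
  set mc := s₀.sup Prod.fst with hmcdef
  set M := max (max m₀ N₀) (mc + 1) with hMdef
  have hex : ∀ n, M ≤ n → ∃ c, c ≤ n ∧ (n, c) ∉ A β₀ := by
    intro n hn
    by_contra h
    push_neg at h
    have hsub : Set.Iic n ⊆ {k | (n, k) ∈ A β₀} := fun c hc => h c hc
    have h1 : (Set.Iic n : Set ℕ).ncard ≤ ({k | (n, k) ∈ A β₀}).ncard :=
      Set.ncard_le_ncard hsub (hsecfin β₀ hβ₀lt n)
    have h2 : (Set.Iic n : Set ℕ).ncard = n + 1 := by
      rw [← Finset.coe_Iic, Set.ncard_coe_finset, Nat.card_Iic]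
    have h3 : ({k | (n, k) ∈ A β₀}).ncard ≤ N₀ :=
      hβ₀cl n (((le_max_left m₀ N₀).trans (le_max_left _ _)).trans hn)
    have h4 : N₀ ≤ n := ((le_max_right m₀ N₀).trans (le_max_left _ _)).trans hn
    omega
  set c : ℕ → ℕ := fun n => if h : ∃ c, c ≤ n ∧ (n, c) ∉ A β₀ then h.choose else 0 with hcdef
  have hc : ∀ n, M ≤ n → c n ≤ n ∧ (n, c n) ∉ A β₀ := by
    intro n hn
    have h := hex n hn
    simp only [hcdef, dif_pos h]
    exact h.choose_spec
  set X := {n : ℕ | M ≤ n ∧ ({k | (n, k) ∈ A β₀}).ncard = N₀} with hXdef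
  have hXinf : X.Infinite := by
    by_contra h
    rw [Set.not_infinite] at h
    obtain ⟨b, hb⟩ := h.bddAbove
    obtain ⟨n, hn1, hn2⟩ := hFAT (max (b + 1) M)
    have hnX : n ∈ X := ⟨(le_max_right _ _).trans hn1, hn2⟩
    have h5 : n ≤ b := hb hnX
    have h6 : b + 1 ≤ n := (le_max_left _ _).trans hn1
    omega
  set C := (fun n : ℕ => (n, c n)) '' X with hCdef
  have hCinf : C.Infinite :=
    Set.Infinite.image (fun a _ b _ hab => congrArg Prod.fst hab) hXinf
  -- Step 5: `C` is disjoint from `A β` for all `β` in the unbounded fiber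
  have hkey : ∀ β, β₀ ≤ β → β < κ.ord →
      (∀ n, m₀ ≤ n → ({k | (n, k) ∈ A β}).ncard ≤ N₀) →
      gF β = s₀ → ∀ p ∈ C, p ∉ A β := by
    intro β h1 h2 h3 h4 p hp hpA
    obtain ⟨n, hnX, rfl⟩ := hp
    obtain ⟨hnM, hncard⟩ := hnX
    obtain ⟨hcn, hcn2⟩ := hc n hnM
    have hsub : {k | (n, k) ∈ A β₀} ⊆ {k | (n, k) ∈ A β} := by
      intro k hk
      by_contra hk2
      have h5 : (n, k) ∈ A β₀ \ A β := ⟨hk, hk2⟩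
      rw [hdiff β h1 h2 h4] at h5
      have h6 : n ≤ mc := Finset.le_sup (f := Prod.fst) h5
      have h7 : mc + 1 ≤ n := (le_max_right _ _).trans hnM
      omega
    have hsub2 : insert (c n) {k | (n, k) ∈ A β₀} ⊆ {k | (n, k) ∈ A β} := by
      intro k hk
      rcases Set.mem_insert_iff.mp hk with rfl | hk
      · exact hpA
      · exact hsub hk
    have hcn2' : c n ∉ {k | (n, k) ∈ A β₀} := hcn2
    have h5 : (insert (c n) {k | (n, k) ∈ A β₀}).ncard = N₀ + 1 := by
      rw [Set.ncard_insert_of_notMem hcn2' (hsecfin β₀ hβ₀lt n), hncard]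
    have h6 : (insert (c n) {k | (n, k) ∈ A β₀}).ncard ≤ ({k | (n, k) ∈ A β}).ncard :=
      Set.ncard_le_ncard hsub2 (hsecfin β h2 n)
    have h7 : ({k | (n, k) ∈ A β}).ncard ≤ N₀ :=
      h3 n (((le_max_left m₀ N₀).trans (le_max_left _ _)).trans hnM)
    omega
  -- Step 6: conclude with `B = Delta \ C`
  have hCD : C ⊆ Delta := by
    intro p hp
    obtain ⟨n, hnX, rfl⟩ := hp
    exact (hc n hnX.1).1
  refine ⟨Delta \ C, Set.diff_subset, ?_, ?_⟩
  · refine Set.Infinite.mono ?_ hCinf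
    intro p hp
    exact ⟨hCD hp, fun h => h.2 hp⟩
  · intro α hα
    obtain ⟨β, ⟨hββ₀, hβlt, hβcl⟩, hgF, hαβ, -⟩ := hT α hα
    refine (hmono α β hαβ hβlt).subset ?_
    intro p hp
    obtain ⟨hpα, hpB⟩ := hp
    have hpD : p ∈ Delta := (hmem α hα).1 hpα
    have hpC : p ∈ C := by
      by_contra h
      exact hpB ⟨hpD, h⟩
    exact ⟨hpα, fun hpβ => hkey β hββ₀ hβlt hβcl hgF p hpC hpβ⟩
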